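/- Let A be a real tensor of size n×n×n₃, invertible with inverse A⁻¹, let E be a tensor of size n×n×n₃ with ‖A⁻¹‖₂·‖E‖₂ < 1, and suppose B = A+E (entrywise sum) is invertible with inverse B⁻¹. Then, with γ = 1 − ‖A⁻¹‖₂·‖E‖₂, one has ‖B⁻¹−A⁻¹‖_F ≤ (‖A⁻¹‖₂·‖E‖₂/γ)·‖A⁻¹‖_F and ‖B⁻¹−A⁻¹‖₂ ≤ (‖A⁻¹‖₂·‖E‖₂/γ)·‖A⁻¹‖₂. -/

import Mathlib

open scoped Matrix.Norms.L2Operator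

noncomputable section

/-- The t-product of third-order tensors. -/
def tProd {n₁ n₂ n₃ n₄ : ℕ} [NeZero n₃] (A : Fin n₁ → Fin n₂ → ZMod n₃ → ℝ)
    (B : Fin n₂ → Fin n₄ → ZMod n₃ → ℝ) : Fin n₁ → Fin n₄ → ZMod n₃ → ℝ :=
  fun i j k => ∑ l : Fin n₂, ∑ m : ZMod n₃, A i l (k - m) * B l j m

/-- The Frobenius norm of a third-order tensor. -/
def frobNorm {n₁ n₂ n₃ : ℕ} [NeZero n₃] (A : Fin n₁ → Fin n₂ → ZMod n₃ → ℝ) : ℝ :=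
  Real.sqrt (∑ i : Fin n₁, ∑ j : Fin n₂, ∑ k : ZMod n₃, (A i j k) ^ 2)

/-- The block circulant matrix of a third-order tensor. -/
def bcirc {n₁ n₂ n₃ : ℕ} (A : Fin n₁ → Fin n₂ → ZMod n₃ → ℝ) :
    Matrix (Fin n₁ × ZMod n₃) (Fin n₂ × ZMod n₃) ℝ :=
  fun p q => A p.1 q.1 (p.2 - q.2)

/-- The spectral norm of a third-order tensor: the L2 operator norm of its
block circulant matrix. -/
def specNorm {n₁ n₂ n₃ : ℕ} [NeZero n₃] (A : Fin n₁ → Fin n₂ → ZMod n₃ → ℝ) : ℝ :=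
  ‖bcirc A‖

/-- The identity tensor. -/
def tId (n n₃ : ℕ) : Fin n → Fin n → ZMod n₃ → ℝ :=
  fun i j k => if i = j ∧ k = 0 then 1 else 0

/-- The tensor transpose. -/
def tTrans {n₁ n₂ n₃ : ℕ} (A : Fin n₁ → Fin n₂ → ZMod n₃ → ℝ) :
    Fin n₂ → Fin n₁ → ZMod n₃ → ℝ :=
  fun i j k => A j i (-k)

/-- `X` is a Moore-Penrose inverse of `A`. -/
def IsMPInv {n₁ n₂ n₃ : ℕ} [NeZero n₃] (A : Fin n₁ → Fin n₂ → ZMod n₃ → ℝ)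
    (X : Fin n₂ → Fin n₁ → ZMod n₃ → ℝ) : Prop :=
  tProd (tProd A X) A = A ∧ tProd (tProd X A) X = X ∧
    tTrans (tProd A X) = tProd A X ∧ tTrans (tProd X A) = tProd X A

/-- The `i`-th DFT block of a third-order tensor. -/
def dftBlock {n₁ n₂ n₃ : ℕ} [NeZero n₃] (A : Fin n₁ → Fin n₂ → ZMod n₃ → ℝ) (i : ZMod n₃) :
    Matrix (Fin n₁) (Fin n₂) ℂ :=
  fun p q => ∑ k : ZMod n₃,
    Complex.exp (-2 * Real.pi * Complex.I * (i.val : ℂ) * (k.val : ℂ) / (n₃ : ℂ)) * (A p q k : ℂ)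

end

section Aux

variable {n₁ n₂ n₃ n₄ : ℕ} [NeZero n₃]

lemma bcirc_tProd (A : Fin n₁ → Fin n₂ → ZMod n₃ → ℝ) (B : Fin n₂ → Fin n₄ → ZMod n₃ → ℝ) :
    bcirc (tProd A B) = bcirc A * bcirc B := by
  ext ⟨i, k⟩ ⟨j, m⟩
  simp only [bcirc, tProd, Matrix.mul_apply, Fintype.sum_prod_type]
  refine Finset.sum_congr rfl fun l _ => ?_
  refine Fintype.sum_equiv (Equiv.addRight m) _ _ fun q => ?_
  simp only [Equiv.coe_addRight]
  ring_nf

lemma bcirc_tId (n n₃ : ℕ) [NeZero n₃] : bcirc (tId n n₃) = (1 : Matrix _ _ ℝ) := by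
  ext ⟨i, k⟩ ⟨j, m⟩
  simp [bcirc, tId, Matrix.one_apply, Prod.ext_iff, sub_eq_zero]

lemma bcirc_injective :
    Function.Injective (bcirc (n₁ := n₁) (n₂ := n₂) (n₃ := n₃)) := by
  intro A B h
  funext i j k
  have := congrFun (congrFun h (i, k)) (j, (0 : ZMod n₃))
  simpa [bcirc] using this

lemma bcirc_add (A B : Fin n₁ → Fin n₂ → ZMod n₃ → ℝ) :
    bcirc (A + B) = bcirc A + bcirc B := by
  ext ⟨i, k⟩ ⟨j, m⟩; simp [bcirc]

lemma bcirc_sub (A B : Fin n₁ → Fin n₂ → ZMod n₃ → ℝ) :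
    bcirc (A - B) = bcirc A - bcirc B := by
  ext ⟨i, k⟩ ⟨j, m⟩; simp [bcirc]

lemma bcirc_neg (A : Fin n₁ → Fin n₂ → ZMod n₃ → ℝ) :
    bcirc (-A) = -bcirc A := by
  ext ⟨i, k⟩ ⟨j, m⟩; simp [bcirc]

lemma frobNorm_neg (A : Fin n₁ → Fin n₂ → ZMod n₃ → ℝ) :
    frobNorm (-A) = frobNorm A := by
  simp [frobNorm]

lemma frobNorm_nonneg (A : Fin n₁ → Fin n₂ → ZMod n₃ → ℝ) : 0 ≤ frobNorm A :=
  Real.sqrt_nonneg _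

lemma frobNorm_tProd_le (C : Fin n₁ → Fin n₂ → ZMod n₃ → ℝ)
    (X : Fin n₂ → Fin n₄ → ZMod n₃ → ℝ) :
    frobNorm (tProd C X) ≤ specNorm C * frobNorm X := by
  have hc0 : (0:ℝ) ≤ specNorm C := norm_nonneg _
  rw [frobNorm, frobNorm]
  have key : ∀ j : Fin n₄,
      (∑ i : Fin n₁, ∑ k : ZMod n₃, (tProd C X i j k) ^ 2) ≤
        specNorm C ^ 2 * ∑ l : Fin n₂, ∑ m : ZMod n₃, (X l j m) ^ 2 := by
    intro j
    set v : EuclideanSpace ℝ (Fin n₂ × ZMod n₃) := WithLp.toLp 2 (fun p : Fin n₂ × ZMod n₃ => X p.1 j p.2) with hv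
    have h := Matrix.l2_opNorm_mulVec (bcirc C) v
    have h2 : ‖(EuclideanSpace.equiv (Fin n₁ × ZMod n₃) ℝ).symm (Matrix.mulVec (bcirc C) v)‖ ^ 2 ≤
        (specNorm C * ‖v‖) ^ 2 := by
      apply pow_le_pow_left₀ (norm_nonneg _) h 2
    have e1 : ‖(EuclideanSpace.equiv (Fin n₁ × ZMod n₃) ℝ).symm (Matrix.mulVec (bcirc C) v)‖ ^ 2 =
        ∑ i : Fin n₁, ∑ k : ZMod n₃, (tProd C X i j k) ^ 2 := by
      rw [EuclideanSpace.norm_eq, Real.sq_sqrt (by positivity)]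
      rw [Fintype.sum_prod_type]
      refine Finset.sum_congr rfl fun i _ => Finset.sum_congr rfl fun k _ => ?_
      have : (Matrix.mulVec (bcirc C) v) (i, k) = tProd C X i j k := by
        simp [Matrix.mulVec, dotProduct, bcirc, tProd, hv, Fintype.sum_prod_type]
      simp [this, sq_abs]
    have e2 : ‖v‖ ^ 2 = ∑ l : Fin n₂, ∑ m : ZMod n₃, (X l j m) ^ 2 := by
      rw [EuclideanSpace.norm_eq, Real.sq_sqrt (by positivity)]
      rw [Fintype.sum_prod_type]
      simp [hv, sq_abs]
    calc (∑ i : Fin n₁, ∑ k : ZMod n₃, (tProd C X i j k) ^ 2)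
        ≤ (specNorm C * ‖v‖) ^ 2 := by rw [← e1]; exact h2
      _ = specNorm C ^ 2 * ∑ l : Fin n₂, ∑ m : ZMod n₃, (X l j m) ^ 2 := by
          rw [mul_pow, e2]
  have total : (∑ i : Fin n₁, ∑ j : Fin n₄, ∑ k : ZMod n₃, (tProd C X i j k) ^ 2) ≤
      specNorm C ^ 2 * ∑ l : Fin n₂, ∑ j : Fin n₄, ∑ m : ZMod n₃, (X l j m) ^ 2 := by
    rw [Finset.sum_comm]
    rw [show (∑ l : Fin n₂, ∑ j : Fin n₄, ∑ m : ZMod n₃, (X l j m) ^ 2) =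
      ∑ j : Fin n₄, ∑ l : Fin n₂, ∑ m : ZMod n₃, (X l j m) ^ 2 from Finset.sum_comm,
      Finset.mul_sum]
    exact Finset.sum_le_sum fun j _ => key j
  calc Real.sqrt (∑ i : Fin n₁, ∑ j : Fin n₄, ∑ k : ZMod n₃, (tProd C X i j k) ^ 2)
      ≤ Real.sqrt (specNorm C ^ 2 * ∑ l : Fin n₂, ∑ j : Fin n₄, ∑ m : ZMod n₃, (X l j m) ^ 2) :=
        Real.sqrt_le_sqrt total
    _ = specNorm C * Real.sqrt (∑ l : Fin n₂, ∑ j : Fin n₄, ∑ m : ZMod n₃, (X l j m) ^ 2) := by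
        rw [Real.sqrt_mul (sq_nonneg _), Real.sqrt_sq hc0]

end Aux

theorem perturbed_inverse_diff_bound (n n₃ : ℕ) [NeZero n₃] (hn : 0 < n)
    (A Ainv E Binv : Fin n → Fin n → ZMod n₃ → ℝ)
    (hA₁ : tProd A Ainv = tId n n₃) (hA₂ : tProd Ainv A = tId n n₃)
    (hE : specNorm Ainv * specNorm E < 1)
    (hB₁ : tProd (A + E) Binv = tId n n₃) (hB₂ : tProd Binv (A + E) = tId n n₃) :
    frobNorm (Binv - Ainv) ≤
        (specNorm Ainv * specNorm E / (1 - specNorm Ainv * specNorm E)) * frobNorm Ainv ∧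
      specNorm (Binv - Ainv) ≤
        (specNorm Ainv * specNorm E / (1 - specNorm Ainv * specNorm E)) * specNorm Ainv := by
  set a := bcirc A with ha
  set ai := bcirc Ainv with hai
  set e := bcirc E with he
  set bi := bcirc Binv with hbi
  have hA₁' : a * ai = 1 := by rw [ha, hai, ← bcirc_tProd, hA₁, bcirc_tId]
  have hB₂' : bi * (a + e) = 1 := by
    rw [ha, he, hbi, ← bcirc_add, ← bcirc_tProd, hB₂, bcirc_tId]
  have hsum : bi + bi * e * ai = ai := by
    have h1 : bi * (a + e) * ai = ai := by rw [hB₂', one_mul]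
    have h2 : bi * (a + e) * ai = bi + bi * e * ai := by
      rw [mul_add, add_mul, mul_assoc bi a ai, hA₁', mul_one]
    rw [← h2]; exact h1
  have key : bi - ai = -(bi * e * ai) := by
    rw [eq_neg_iff_add_eq_zero, sub_add_eq_add_sub, hsum, sub_self]
  have hγ : (0:ℝ) < 1 - specNorm Ainv * specNorm E := by linarith
  have hai0 : (0:ℝ) ≤ specNorm Ainv := norm_nonneg _
  have he0 : (0:ℝ) ≤ specNorm E := norm_nonneg _
  have hbi0 : (0:ℝ) ≤ ‖bi‖ := norm_nonneg _
  -- bound on ‖bi‖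
  have hbibd : ‖bi‖ * (1 - specNorm Ainv * specNorm E) ≤ specNorm Ainv := by
    have h1 : bi = ai - bi * e * ai := eq_sub_of_add_eq hsum
    have h2 : ‖bi‖ ≤ specNorm Ainv + ‖bi‖ * specNorm E * specNorm Ainv := by
      calc ‖bi‖ = ‖ai - bi * e * ai‖ := by rw [← h1]
        _ ≤ ‖ai‖ + ‖bi * e * ai‖ := norm_sub_le _ _
        _ ≤ ‖ai‖ + ‖bi * e‖ * ‖ai‖ := by
            gcongr; exact Matrix.l2_opNorm_mul _ _
        _ ≤ ‖ai‖ + ‖bi‖ * ‖e‖ * ‖ai‖ := by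
            gcongr; exact Matrix.l2_opNorm_mul _ _
    nlinarith
  have hbie : ‖bi * e * ai‖ ≤ ‖bi‖ * specNorm E * specNorm Ainv := by
    calc ‖bi * e * ai‖ ≤ ‖bi * e‖ * ‖ai‖ := Matrix.l2_opNorm_mul _ _
      _ ≤ ‖bi‖ * ‖e‖ * ‖ai‖ := by gcongr; exact Matrix.l2_opNorm_mul _ _
  have hmain : ‖bi‖ * specNorm E * specNorm Ainv ≤
      specNorm Ainv * specNorm E / (1 - specNorm Ainv * specNorm E) * specNorm Ainv := by
    rw [div_mul_eq_mul_div, le_div_iff₀ hγ]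
    nlinarith [mul_le_mul_of_nonneg_right hbibd (mul_nonneg he0 hai0)]
  constructor
  · -- Frobenius bound
    have hten : Binv - Ainv = -(tProd (tProd Binv E) Ainv) := by
      apply bcirc_injective
      rw [bcirc_sub, bcirc_neg, bcirc_tProd, bcirc_tProd]
      exact key
    rw [hten, frobNorm_neg]
    have h1 : frobNorm (tProd (tProd Binv E) Ainv) ≤
        specNorm (tProd Binv E) * frobNorm Ainv := frobNorm_tProd_le _ _
    have h2 : specNorm (tProd Binv E) ≤ ‖bi‖ * specNorm E := by
      show ‖bcirc (tProd Binv E)‖ ≤ _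
      rw [bcirc_tProd]
      exact Matrix.l2_opNorm_mul _ _
    have h3 : ‖bi‖ * specNorm E ≤
        specNorm Ainv * specNorm E / (1 - specNorm Ainv * specNorm E) := by
      rw [le_div_iff₀ hγ]
      nlinarith [mul_le_mul_of_nonneg_right hbibd he0]
    calc frobNorm (tProd (tProd Binv E) Ainv) ≤ specNorm (tProd Binv E) * frobNorm Ainv := h1
      _ ≤ specNorm Ainv * specNorm E / (1 - specNorm Ainv * specNorm E) * frobNorm Ainv := by
          gcongr
          · exact frobNorm_nonneg _
          · exact le_trans h2 h3
  · -- spectral bound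
    have : specNorm (Binv - Ainv) = ‖bi * e * ai‖ := by
      show ‖bcirc (Binv - Ainv)‖ = _
      rw [bcirc_sub, key, norm_neg]
    rw [this]
    exact le_trans hbie hmain
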